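/- The interleaving distance between the Reeb precosheaves of (X,f) and (Y,g) equals the interleaving distance between the Reeb precosheaves of their Reeb graphs: d_I(𝒟(Rb(Y,g)), 𝒟(Rb(X,f))) = d_I(𝒟(Y,g), 𝒟(X,f)). -/

import Mathlib

open CategoryTheory Set
open scoped NNReal ENNReal

/-- The Reeb relation of `f : X → ℝ`: `x ∼_f y` iff `y` lies in the connected
component of `x` inside the level set `f ⁻¹' {f x}`. -/
def ReebRel {X : Type*} [TopologicalSpace X] (f : X → ℝ) (x y : X) : Prop :=
  y ∈ connectedComponentIn (f ⁻¹' {f x}) x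

theorem ReebRel.apply_eq {X : Type*} [TopologicalSpace X] {f : X → ℝ} {x y : X}
    (h : ReebRel f x y) : f x = f y :=
  (show f y = f x from connectedComponentIn_subset (f ⁻¹' {f x}) x h).symm

/-- The function induced by `f` on the Reeb quotient. -/
def reebTilde {X : Type*} [TopologicalSpace X] (f : X → ℝ) : Quot (ReebRel f) → ℝ :=
  Quot.lift f fun _ _ h => h.apply_eq

/-- The poset of nonempty open intervals `(a, b)` of `ℝ`, ordered by inclusion. -/
def RInt : Type := {p : ℝ × ℝ // p.1 < p.2}

namespace RInt

instance : Preorder RInt where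
  le I J := J.1.1 ≤ I.1.1 ∧ I.1.2 ≤ J.1.2
  le_refl I := ⟨le_refl _, le_refl _⟩
  le_trans I J K h h' := ⟨h'.1.trans h.1, h.2.trans h'.2⟩

/-- The underlying open interval `(a, b) ⊆ ℝ`. -/
def set (I : RInt) : Set ℝ := Set.Ioo I.1.1 I.1.2

theorem set_mono {I J : RInt} (h : I ≤ J) : I.set ⊆ J.set :=
  Set.Ioo_subset_Ioo h.1 h.2

/-- The `δ`-thickening `(a - δ, b + δ)` of the open interval `(a, b)`. -/
def widen (δ : ℝ≥0) (I : RInt) : RInt :=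
  ⟨(I.1.1 - δ, I.1.2 + δ), by
    have h := I.2
    have h0 : (0 : ℝ) ≤ δ := δ.2
    dsimp only
    linarith⟩

theorem widen_mono (δ : ℝ≥0) : Monotone (widen δ) := by
  intro I J h
  exact ⟨by dsimp [widen]; linarith [h.1], by dsimp [widen]; linarith [h.2]⟩

theorem le_widen (δ : ℝ≥0) (I : RInt) : I ≤ widen δ I := by
  have h0 : (0 : ℝ) ≤ δ := δ.2
  exact ⟨by dsimp [widen]; linarith, by dsimp [widen]; linarith⟩

end RInt

/-- The widening functor `ω_δ` sending `(a, b)` to `(a - δ, b + δ)`. -/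
def widenFunctor (δ : ℝ≥0) : RInt ⥤ RInt := (RInt.widen_mono δ).functor

/-- Two functors `C, D : Int ⥤ 𝒜` are `δ`-interleaved if there are natural
transformations `Φ : C ⟶ D ∘ ω_δ` and `Ψ : D ⟶ C ∘ ω_δ` whose composites are
the maps induced by the inclusions `I ⊆ ω_δ (ω_δ I) = ω_{2δ} I`. -/
def IsInterleaving {A : Type*} [Category A] (δ : ℝ≥0) (C D : RInt ⥤ A) : Prop :=
  ∃ (Φ : C ⟶ widenFunctor δ ⋙ D) (Ψ : D ⟶ widenFunctor δ ⋙ C),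
    (∀ I : RInt, Φ.app I ≫ Ψ.app ((widenFunctor δ).obj I) =
      C.map (homOfLE ((RInt.le_widen δ I).trans (RInt.le_widen δ (RInt.widen δ I))))) ∧
    (∀ I : RInt, Ψ.app I ≫ Φ.app ((widenFunctor δ).obj I) =
      D.map (homOfLE ((RInt.le_widen δ I).trans (RInt.le_widen δ (RInt.widen δ I)))))

/-- The interleaving distance between two functors on the poset of open intervals. -/
noncomputable def interleavingDist {A : Type*} [Category A] (C D : RInt ⥤ A) : ℝ≥0∞ :=
  ⨅ (δ : ℝ≥0) (_ : IsInterleaving δ C D), (δ : ℝ≥0∞)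

/-- The Reeb precosheaf `𝒟(X, f)`, sending an open interval `I` to the set of
connected components of `f ⁻¹' I`, with maps induced by inclusions. -/
def reebPrecosheaf {X : Type u} [TopologicalSpace X] (f : X → ℝ) : RInt ⥤ Type u where
  obj I := ConnectedComponents ↥(f ⁻¹' I.set)
  map {I J} h :=
    TypeCat.ofHom
      (continuous_inclusion (Set.preimage_mono (RInt.set_mono h.le))).connectedComponentsMap
  map_id I := by
    ext c
    obtain ⟨x, rfl⟩ := ConnectedComponents.surjective_coe c
    rfl
  map_comp {I J K} h h' := by
    ext c
    obtain ⟨x, rfl⟩ := ConnectedComponents.surjective_coe c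
    rfl



open Topology

universe u

section QuotientPreconnected

variable {α β : Type*} [TopologicalSpace α] [TopologicalSpace β]

theorem preconnectedSpace_of_isQuotientMap {q : α → β} (hq : IsQuotientMap q)
    (hfib : ∀ b, IsPreconnected (q ⁻¹' {b})) [PreconnectedSpace β] :
    PreconnectedSpace α := by
  constructor
  intro u v hu hv hcov ⟨a, _, hau⟩ ⟨b, _, hbv⟩
  by_contra hne
  have hdisj : u ∩ v = ∅ := by
    rw [Set.not_nonempty_iff_eq_empty] at hne
    simpa [Set.univ_inter] using hne
  have hfib_sub : ∀ c : β, q ⁻¹' {c} ⊆ u ∨ q ⁻¹' {c} ⊆ v := by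
    intro c
    by_contra hc
    push_neg at hc
    obtain ⟨hc1, hc2⟩ := hc
    obtain ⟨x, hx, hxv⟩ := Set.not_subset.mp hc2
    obtain ⟨y, hy, hyu⟩ := Set.not_subset.mp hc1
    have hxu : x ∈ u := by
      have := hcov (Set.mem_univ x)
      rcases this with h | h
      · exact h
      · exact absurd h hxv
    have hyv : y ∈ v := by
      have := hcov (Set.mem_univ y)
      rcases this with h | h
      · exact absurd h hyu
      · exact h
    obtain ⟨z, _, hz⟩ := hfib c u v hu hv (fun w _ => hcov (Set.mem_univ w))
      ⟨x, hx, hxu⟩ ⟨y, hy, hyv⟩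
    exact absurd hdisj (Set.Nonempty.ne_empty ⟨z, hz⟩)
  set Su : Set β := {c | q ⁻¹' {c} ⊆ u} with hSu
  set Sv : Set β := {c | q ⁻¹' {c} ⊆ v} with hSv
  have hpreu : q ⁻¹' Su = u := by
    ext x
    constructor
    · intro hx; exact hx rfl
    · intro hx
      rcases hfib_sub (q x) with h | h
      · exact h
      · exact absurd hdisj (Set.Nonempty.ne_empty ⟨x, hx, h rfl⟩)
  have hprev : q ⁻¹' Sv = v := by
    ext x
    constructor
    · intro hx; exact hx rfl
    · intro hx
      rcases hfib_sub (q x) with h | h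
      · exact absurd hdisj (Set.Nonempty.ne_empty ⟨x, h rfl, hx⟩)
      · exact h
  have hopenu : IsOpen Su := hq.isCoinducing.isOpen_preimage.mp (hpreu ▸ hu)
  have hopenv : IsOpen Sv := hq.isCoinducing.isOpen_preimage.mp (hprev ▸ hv)
  obtain ⟨c, _, hcu, hcv⟩ := PreconnectedSpace.isPreconnected_univ Su Sv hopenu hopenv
    (fun c _ => (hfib_sub c).imp id id)
    ⟨q a, Set.mem_univ _, by rw [← hpreu] at hau; exact hau⟩
    ⟨q b, Set.mem_univ _, by rw [← hprev] at hbv; exact hbv⟩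
  obtain ⟨x, hx⟩ := hq.surjective c
  have : x ∈ u ∩ v := ⟨hcu (by simp [hx]), hcv (by simp [hx])⟩
  exact absurd hdisj (Set.Nonempty.ne_empty ⟨x, this⟩)

end QuotientPreconnected


section Reeb

variable {X : Type u} [TopologicalSpace X] (f : X → ℝ)

theorem reebRel_equivalence : Equivalence (ReebRel f) where
  refl x := mem_connectedComponentIn (show f x ∈ ({f x} : Set ℝ) from rfl)
  symm {x y} h := by
    have hxy : f x = f y := h.apply_eq
    have h1 : connectedComponentIn (f ⁻¹' {f x}) x = connectedComponentIn (f ⁻¹' {f x}) y :=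
      connectedComponentIn_eq h
    show x ∈ connectedComponentIn (f ⁻¹' {f y}) y
    rw [← hxy, ← h1]
    exact mem_connectedComponentIn (show f x ∈ ({f x} : Set ℝ) from rfl)
  trans {x y z} h h' := by
    have hxy : f x = f y := h.apply_eq
    have h1 : connectedComponentIn (f ⁻¹' {f x}) x = connectedComponentIn (f ⁻¹' {f x}) y :=
      connectedComponentIn_eq h
    show z ∈ connectedComponentIn (f ⁻¹' {f x}) x
    rw [h1]
    have : (f ⁻¹' {f y}) = (f ⁻¹' {f x}) := by rw [hxy]
    rw [← this]
    exact h'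

theorem reeb_quot_mk_eq_iff {x y : X} :
    Quot.mk (ReebRel f) x = Quot.mk (ReebRel f) y ↔ ReebRel f x y :=
  ⟨fun h => ((reebRel_equivalence f).eqvGen_iff).mp (Quot.eqvGen_exact h), fun h => Quot.sound h⟩

theorem reeb_fiber (x : X) :
    Quot.mk (ReebRel f) ⁻¹' {Quot.mk (ReebRel f) x} = connectedComponentIn (f ⁻¹' {f x}) x := by
  ext y
  simp only [Set.mem_preimage, Set.mem_singleton_iff]
  constructor
  · intro h
    exact (reebRel_equivalence f).symm ((reeb_quot_mk_eq_iff f).mp h)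
  · intro h
    exact ((reeb_quot_mk_eq_iff f).mpr ((reebRel_equivalence f).symm h))

theorem reebTilde_continuous (hf : Continuous f) : Continuous (reebTilde f) :=
  isQuotientMap_quot_mk.continuous_iff.mpr hf

end Reeb

section Restrict

variable {X : Type u} [TopologicalSpace X] (f : X → ℝ) (S : Set ℝ)

/-- The restriction of the Reeb quotient map to the preimage of `S`. -/
def reebRestrict : (f ⁻¹' S) → (reebTilde f ⁻¹' S) :=
  fun a => ⟨Quot.mk (ReebRel f) a.1, a.2⟩

theorem reebRestrict_continuous : Continuous (reebRestrict f S) :=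
  Continuous.subtype_mk (continuous_quot_mk.comp continuous_subtype_val) _

theorem reebRestrict_surjective : Function.Surjective (reebRestrict f S) := by
  rintro ⟨z, hz⟩
  obtain ⟨x, rfl⟩ := Quot.exists_rep z
  exact ⟨⟨x, hz⟩, rfl⟩

theorem reebRestrict_isQuotientMap (hf : Continuous f) (hS : IsOpen S) :
    IsQuotientMap (reebRestrict f S) := by
  rw [isQuotientMap_iff, isCoinducing_iff, and_comm]
  refine ⟨reebRestrict_surjective f S, fun s => ⟨fun hs => ?_, fun hs => hs.preimage (reebRestrict_continuous f S)⟩⟩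
  have hA : IsOpen (f ⁻¹' S) := hS.preimage hf
  have hU : IsOpen ((Subtype.val : (f ⁻¹' S) → X) '' (reebRestrict f S ⁻¹' s)) :=
    hA.isOpenMap_subtype_val _ hs
  have hkey : Quot.mk (ReebRel f) ⁻¹' ((Subtype.val : (reebTilde f ⁻¹' S) → _) '' s)
      = (Subtype.val : (f ⁻¹' S) → X) '' (reebRestrict f S ⁻¹' s) := by
    ext x
    simp only [Set.mem_preimage, Set.mem_image]
    constructor
    · rintro ⟨b, hb, hbx⟩
      have hxA : x ∈ f ⁻¹' S := by
        have : reebTilde f (Quot.mk (ReebRel f) x) ∈ S := by rw [← hbx]; exact b.2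
        exact this
      refine ⟨⟨x, hxA⟩, ?_, rfl⟩
      have : reebRestrict f S ⟨x, hxA⟩ = b := Subtype.ext hbx.symm
      rw [this]; exact hb
    · rintro ⟨a, ha, rfl⟩
      exact ⟨reebRestrict f S a, ha, rfl⟩
  have : IsOpen ((Subtype.val : (reebTilde f ⁻¹' S) → _) '' s) :=
    isQuotientMap_quot_mk.isCoinducing.isOpen_preimage.mp (hkey ▸ hU)
  have hval : s = Subtype.val ⁻¹' ((Subtype.val : (reebTilde f ⁻¹' S) → _) '' s) :=
    (Set.preimage_image_eq s Subtype.val_injective).symm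
  rw [hval]
  exact this.preimage continuous_subtype_val

theorem reebRestrict_fiber_preconnected (a : (f ⁻¹' S)) :
    IsPreconnected (reebRestrict f S ⁻¹' {reebRestrict f S a}) := by
  rw [← IsInducing.subtypeVal.isPreconnected_image]
  have himg : (Subtype.val : (f ⁻¹' S) → X) '' (reebRestrict f S ⁻¹' {reebRestrict f S a})
      = connectedComponentIn (f ⁻¹' {f a.1}) a.1 := by
    ext x
    simp only [Set.mem_image, Set.mem_preimage, Set.mem_singleton_iff]
    constructor
    · rintro ⟨b, hb, rfl⟩
      have : Quot.mk (ReebRel f) b.1 = Quot.mk (ReebRel f) a.1 := congrArg Subtype.val hb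
      rw [← reeb_fiber]
      exact this
    · intro hx
      have hq : Quot.mk (ReebRel f) x = Quot.mk (ReebRel f) a.1 := by
        have : x ∈ Quot.mk (ReebRel f) ⁻¹' {Quot.mk (ReebRel f) a.1} := by
          rw [reeb_fiber]; exact hx
        exact this
      have hxA : x ∈ f ⁻¹' S := by
        have hfx : f x = f a.1 := (((reebRel_equivalence f).symm
          ((reeb_quot_mk_eq_iff f).mp hq)).apply_eq).symm
        show f x ∈ S
        rw [hfx]; exact a.2
      exact ⟨⟨x, hxA⟩, Subtype.ext hq, rfl⟩
  rw [himg]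
  exact isPreconnected_connectedComponentIn

end Restrict

section Inj

variable {X : Type u} [TopologicalSpace X] (f : X → ℝ) (S : Set ℝ)

theorem reeb_component_preimage_preconnected (hf : Continuous f) (hS : IsOpen S)
    (c : (reebTilde f ⁻¹' S)) :
    IsPreconnected (reebRestrict f S ⁻¹' connectedComponent c) := by
  set C : Set (reebTilde f ⁻¹' S) := connectedComponent c with hC
  set P : Set (f ⁻¹' S) := reebRestrict f S ⁻¹' C with hPdef
  have hqquot : IsQuotientMap (reebRestrict f S) := reebRestrict_isQuotientMap f S hf hS
  have hCclosed : IsClosed C := isClosed_connectedComponent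
  have hPclosed : IsClosed P := hCclosed.preimage (reebRestrict_continuous f S)
  -- the restriction of reebRestrict f S to P → C
  set r : P → C := fun p => ⟨reebRestrict f S p.1, p.2⟩ with hr
  have hrcont : Continuous r :=
    Continuous.subtype_mk ((reebRestrict_continuous f S).comp continuous_subtype_val) _
  have hrsurj : Function.Surjective r := by
    rintro ⟨z, hz⟩
    obtain ⟨a, ha⟩ := reebRestrict_surjective f S z
    exact ⟨⟨a, show reebRestrict f S a ∈ C by rw [ha]; exact hz⟩, Subtype.ext ha⟩
  have hrquot : IsQuotientMap r := by
    rw [isQuotientMap_iff_isClosed]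
    refine ⟨hrsurj, fun s => ⟨fun hs => hs.preimage hrcont, fun hs => ?_⟩⟩
    have hT : IsClosed ((Subtype.val : P → (f ⁻¹' S)) '' (r ⁻¹' s)) :=
      hPclosed.isClosedMap_subtype_val _ hs
    have hkey : reebRestrict f S ⁻¹' ((Subtype.val : C → (reebTilde f ⁻¹' S)) '' s)
        = (Subtype.val : P → (f ⁻¹' S)) '' (r ⁻¹' s) := by
      ext a
      simp only [Set.mem_preimage, Set.mem_image]
      constructor
      · rintro ⟨d, hd, hda⟩
        have haP : a ∈ P := by show reebRestrict f S a ∈ C; rw [← hda]; exact d.2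
        refine ⟨⟨a, haP⟩, ?_, rfl⟩
        have : r ⟨a, haP⟩ = d := Subtype.ext hda.symm
        rw [this]; exact hd
      · rintro ⟨p, hp, rfl⟩
        exact ⟨r p, hp, rfl⟩
    have : IsClosed ((Subtype.val : C → (reebTilde f ⁻¹' S)) '' s) :=
      ((isQuotientMap_iff_isClosed.mp hqquot).2 _).mpr (hkey ▸ hT)
    have hval : s = Subtype.val ⁻¹' ((Subtype.val : C → (reebTilde f ⁻¹' S)) '' s) :=
      (Set.preimage_image_eq s Subtype.val_injective).symm
    rw [hval]
    exact this.preimage continuous_subtype_val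
  have hrfib : ∀ d : C, IsPreconnected (r ⁻¹' {d}) := by
    intro d
    rw [← IsInducing.subtypeVal.isPreconnected_image]
    obtain ⟨a0, ha0⟩ := reebRestrict_surjective f S d.1
    have himg : (Subtype.val : P → (f ⁻¹' S)) '' (r ⁻¹' {d}) = reebRestrict f S ⁻¹' {reebRestrict f S a0} := by
      ext a
      simp only [Set.mem_image, Set.mem_preimage, Set.mem_singleton_iff]
      constructor
      · rintro ⟨p, hp, rfl⟩
        rw [ha0]
        exact congrArg Subtype.val hp
      · intro ha
        have haP : a ∈ P := by show reebRestrict f S a ∈ C; rw [ha, ha0]; exact d.2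
        exact ⟨⟨a, haP⟩, Subtype.ext (show reebRestrict f S a = d.1 by rw [ha, ha0]), rfl⟩
    rw [himg]
    exact reebRestrict_fiber_preconnected f S a0
  have : PreconnectedSpace C := Subtype.preconnectedSpace isPreconnected_connectedComponent
  have : PreconnectedSpace P := preconnectedSpace_of_isQuotientMap hrquot hrfib
  exact isPreconnected_iff_preconnectedSpace.mpr this

theorem reebRestrict_component_inj (hf : Continuous f) (hS : IsOpen S)
    {a b : (f ⁻¹' S)}
    (h : reebRestrict f S b ∈ connectedComponent (reebRestrict f S a)) :
    b ∈ connectedComponent a := by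
  have hP := reeb_component_preimage_preconnected f S hf hS (reebRestrict f S a)
  exact hP.subset_connectedComponent
    (show a ∈ reebRestrict f S ⁻¹' connectedComponent (reebRestrict f S a) from
      mem_connectedComponent) h

end Inj

section Bij

variable {X : Type u} [TopologicalSpace X] (f : X → ℝ) (S : Set ℝ)

theorem reebComponentsMap_bijective (hf : Continuous f) (hS : IsOpen S) :
    Function.Bijective (reebRestrict_continuous f S).connectedComponentsMap := by
  constructor
  · intro c c' h
    obtain ⟨a, rfl⟩ := ConnectedComponents.surjective_coe c
    obtain ⟨b, rfl⟩ := ConnectedComponents.surjective_coe c'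
    have h' : (ConnectedComponents.mk (reebRestrict f S a))
        = ConnectedComponents.mk (reebRestrict f S b) := h
    rw [ConnectedComponents.coe_eq_coe'] at h' ⊢
    exact reebRestrict_component_inj f S hf hS h'
  · intro c
    obtain ⟨b, rfl⟩ := ConnectedComponents.surjective_coe c
    obtain ⟨a, rfl⟩ := reebRestrict_surjective f S b
    exact ⟨ConnectedComponents.mk a, rfl⟩

end Bij

theorem RInt.isOpen_set (I : RInt) : IsOpen I.set := isOpen_Ioo

theorem IsInterleaving.of_iso {A : Type*} [Category A] {δ : ℝ≥0} {C C' D D' : RInt ⥤ A}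
    (eC : C ≅ C') (eD : D ≅ D') (h : IsInterleaving δ C D) : IsInterleaving δ C' D' := by
  obtain ⟨Φ, Ψ, h1, h2⟩ := h
  refine ⟨eC.inv ≫ Φ ≫ Functor.whiskerLeft (widenFunctor δ) eD.hom,
          eD.inv ≫ Ψ ≫ Functor.whiskerLeft (widenFunctor δ) eC.hom, fun I => ?_, fun I => ?_⟩
  · simp only [NatTrans.comp_app, Functor.whiskerLeft_app, Category.assoc]
    rw [Iso.hom_inv_id_app_assoc]
    rw [reassoc_of% (h1 I)]
    erw [show C.map (homOfLE ((RInt.le_widen δ I).trans (RInt.le_widen δ (RInt.widen δ I)))) ≫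
        eC.hom.app ((widenFunctor δ).obj ((widenFunctor δ).obj I)) =
        eC.hom.app I ≫ C'.map (homOfLE ((RInt.le_widen δ I).trans
          (RInt.le_widen δ (RInt.widen δ I)))) from eC.hom.naturality _,
      Iso.inv_hom_id_app_assoc]
  · simp only [NatTrans.comp_app, Functor.whiskerLeft_app, Category.assoc]
    rw [Iso.hom_inv_id_app_assoc]
    rw [reassoc_of% (h2 I)]
    erw [show D.map (homOfLE ((RInt.le_widen δ I).trans (RInt.le_widen δ (RInt.widen δ I)))) ≫
        eD.hom.app ((widenFunctor δ).obj ((widenFunctor δ).obj I)) =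
        eD.hom.app I ≫ D'.map (homOfLE ((RInt.le_widen δ I).trans
          (RInt.le_widen δ (RInt.widen δ I)))) from eD.hom.naturality _,
      Iso.inv_hom_id_app_assoc]

theorem interleavingDist_eq_of_iso {A : Type*} [Category A] {C C' D D' : RInt ⥤ A}
    (eC : C ≅ C') (eD : D ≅ D') : interleavingDist C D = interleavingDist C' D' :=
  iInf_congr fun δ => iInf_congr_Prop
    ⟨fun h => h.of_iso eC eD, fun h => h.of_iso eC.symm eD.symm⟩ (fun _ => rfl)

/-- The natural isomorphism between the Reeb precosheaf of `(X, f)` and that of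
its Reeb quotient. -/
noncomputable def reebNatIso {X : Type u} [TopologicalSpace X] (f : X → ℝ) (hf : Continuous f) :
    reebPrecosheaf f ≅ reebPrecosheaf (reebTilde f) :=
  NatIso.ofComponents
    (fun I => (Equiv.ofBijective _
      (reebComponentsMap_bijective f I.set hf I.isOpen_set)).toIso)
    (by
      intro I J h
      ext c
      obtain ⟨x, rfl⟩ := ConnectedComponents.surjective_coe c
      rfl)


theorem stmt12 {X Y : Type u} [TopologicalSpace X] [TopologicalSpace Y]
    (f : X → ℝ) (g : Y → ℝ) (hf : Continuous f) (hg : Continuous g) :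
    interleavingDist (reebPrecosheaf (reebTilde g)) (reebPrecosheaf (reebTilde f)) =
      interleavingDist (reebPrecosheaf g) (reebPrecosheaf f) :=
  interleavingDist_eq_of_iso (reebNatIso g hg).symm (reebNatIso f hf).symm
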